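/- arXiv:1312.7765 — 3 statements merged into one kernel-verified Lean document; each statement's English description precedes it below -/
import Mathlib

section
/- Let (C, N) be a regular multi-pointed category with N-kernels, where C is the regular completion of its projective cover P. If every internal reflexive graph in (P, N_P) satisfies (∗π₀), then (C, N) is star-regular. -/
open CategoryTheory CategoryTheory.Limits

universe v u

variable {C : Type u} [Category.{v} C]

/-- A class of morphisms of a category. -/
abbrev MorClass (C : Type u) [Category.{v} C] :=
  ∀ ⦃X Y : C⦄, (X ⟶ Y) → Prop

/-- An ideal of morphisms: closed under pre- and post-composition with arbitrary morphisms. -/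
def IsMorIdeal (N : MorClass C) : Prop :=
  (∀ ⦃X Y Z : C⦄ (f : X ⟶ Y) (g : Y ⟶ Z), N g → N (f ≫ g)) ∧
  (∀ ⦃X Y Z : C⦄ (f : X ⟶ Y) (g : Y ⟶ Z), N f → N (f ≫ g))

/-- `k` is a weak `N`-kernel of `f`. -/
def IsWeakKernel (N : MorClass C) {K X Y : C} (f : X ⟶ Y) (k : K ⟶ X) : Prop :=
  N (k ≫ f) ∧ ∀ ⦃K' : C⦄ (k' : K' ⟶ X), N (k' ≫ f) → ∃ u : K' ⟶ K, u ≫ k = k'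

/-- `k` is an `N`-kernel of `f` (unique factorization). -/
def IsNKernel (N : MorClass C) {K X Y : C} (f : X ⟶ Y) (k : K ⟶ X) : Prop :=
  N (k ≫ f) ∧ ∀ ⦃K' : C⦄ (k' : K' ⟶ X), N (k' ≫ f) → ∃! u : K' ⟶ K, u ≫ k = k'

def HasWeakKernels (N : MorClass C) : Prop :=
  ∀ ⦃X Y : C⦄ (f : X ⟶ Y), ∃ (K : C) (k : K ⟶ X), IsWeakKernel N f k

def HasNKernels (N : MorClass C) : Prop :=
  ∀ ⦃X Y : C⦄ (f : X ⟶ Y), ∃ (K : C) (k : K ⟶ X), IsNKernel N f k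

/-- The condition (∗π₀) for a pair of parallel morphisms: for a weak `N`-kernel `k` of `f₁`
and any morphism `g`, `g f₁ k = g f₂ k ⟺ g f₁ = g f₂`. -/
def StarPi0 (N : MorClass C) {X Y : C} (f₁ f₂ : X ⟶ Y) : Prop :=
  ∀ ⦃K : C⦄ (k : K ⟶ X), IsWeakKernel N f₁ k →
    ∀ ⦃Z : C⦄ (g : Y ⟶ Z), (k ≫ f₁ ≫ g = k ≫ f₂ ≫ g ↔ f₁ ≫ g = f₂ ≫ g)

/-- `(u, v)` is a weak kernel pair of `f`. -/
def IsWeakKernelPair {P X Y : C} (f : X ⟶ Y) (u v : P ⟶ X) : Prop :=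
  u ≫ f = v ≫ f ∧ ∀ ⦃Q : C⦄ (u' v' : Q ⟶ X), u' ≫ f = v' ≫ f →
    ∃ w : Q ⟶ P, w ≫ u = u' ∧ w ≫ v = v'

/-- `(u, v)` is the kernel pair of `f`. -/
def IsKernelPairOf {P X Y : C} (f : X ⟶ Y) (u v : P ⟶ X) : Prop :=
  u ≫ f = v ≫ f ∧ ∀ ⦃Q : C⦄ (u' v' : Q ⟶ X), u' ≫ f = v' ≫ f →
    ∃! w : Q ⟶ P, w ≫ u = u' ∧ w ≫ v = v'

def HasWeakKernelPairs (C : Type u) [Category.{v} C] : Prop :=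
  ∀ ⦃X Y : C⦄ (f : X ⟶ Y), ∃ (P : C) (u v : P ⟶ X), IsWeakKernelPair f u v

def HasKernelPairs (C : Type u) [Category.{v} C] : Prop :=
  ∀ ⦃X Y : C⦄ (f : X ⟶ Y), ∃ (P : C) (u v : P ⟶ X), IsKernelPairOf f u v

/-- `f` is a coequalizer of the pair `(u, v)`. -/
def IsCoequalizerOf {P X Y : C} (u v : P ⟶ X) (f : X ⟶ Y) : Prop :=
  u ≫ f = v ≫ f ∧ ∀ ⦃Z : C⦄ (g : X ⟶ Z), u ≫ g = v ≫ g → ∃! h : Y ⟶ Z, f ≫ h = g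

/-- `f` is a regular epimorphism: a coequalizer of some pair. -/
def IsRegEpi {X Y : C} (f : X ⟶ Y) : Prop :=
  ∃ (P : C) (u v : P ⟶ X), IsCoequalizerOf u v f

/-- `(p₁, p₂)` is a pullback of `(f, g)`. -/
def IsPullbackSq {P X Y Z : C} (p₁ : P ⟶ X) (p₂ : P ⟶ Y) (f : X ⟶ Z) (g : Y ⟶ Z) : Prop :=
  p₁ ≫ f = p₂ ≫ g ∧ ∀ ⦃Q : C⦄ (q₁ : Q ⟶ X) (q₂ : Q ⟶ Y), q₁ ≫ f = q₂ ≫ g →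
    ∃! w : Q ⟶ P, w ≫ p₁ = q₁ ∧ w ≫ p₂ = q₂

/-- A regular category: finitely complete, kernel pairs have coequalizers, and
regular epimorphisms are stable under pullback. -/
structure IsRegularCat (C : Type u) [Category.{v} C] : Prop where
  hasFiniteLimits : HasFiniteLimits C
  coeqOfKernelPairs : ∀ ⦃P X Y : C⦄ (f : X ⟶ Y) (u v : P ⟶ X), IsKernelPairOf f u v →
    ∃ (Q : C) (q : X ⟶ Q), IsCoequalizerOf u v q
  regEpiStable : ∀ ⦃P X Y Z : C⦄ (p₁ : P ⟶ X) (p₂ : P ⟶ Y) (f : X ⟶ Z) (g : Y ⟶ Z),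
    IsPullbackSq p₁ p₂ f g → IsRegEpi g → IsRegEpi p₁

/-- `P` (a class of objects, regarded as a full subcategory) is a projective cover of `C`. -/
structure IsProjectiveCover (P : Set C) : Prop where
  proj : ∀ ⦃X : C⦄, X ∈ P → ∀ ⦃A B : C⦄ (e : A ⟶ B), IsRegEpi e →
    ∀ f : X ⟶ B, ∃ g : X ⟶ A, g ≫ e = f
  covers : ∀ X : C, ∃ (Q : C) (_ : Q ∈ P) (e : Q ⟶ X), IsRegEpi e

/-- An ideal of the full subcategory on `P`, encoded as a class of morphisms of `C`
supported on `P`-objects and closed under composition with `P`-morphisms. -/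
def IsMorIdealOn (P : Set C) (N : MorClass C) : Prop :=
  (∀ ⦃X Y : C⦄ (f : X ⟶ Y), N f → X ∈ P ∧ Y ∈ P) ∧
  (∀ ⦃X Y Z : C⦄ (f : X ⟶ Y) (g : Y ⟶ Z), X ∈ P → N g → N (f ≫ g)) ∧
  (∀ ⦃X Y Z : C⦄ (f : X ⟶ Y) (g : Y ⟶ Z), Z ∈ P → N f → N (f ≫ g))

/-- The extension `N^C` of an ideal `N` of the full subcategory `P` to `C`. -/
def extClass (P : Set C) (N : MorClass C) : MorClass C := fun X Y f =>
  ∃ (A B : C) (_ : A ∈ P) (_ : B ∈ P) (n : A ⟶ B) (e : A ⟶ X) (e' : B ⟶ Y),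
    IsRegEpi e ∧ IsRegEpi e' ∧ N n ∧ e ≫ f = n ≫ e'

/-- The restriction `M_P` of an ideal `M` of `C` to the full subcategory `P`. -/
def restClass (P : Set C) (M : MorClass C) : MorClass C := fun X Y f =>
  X ∈ P ∧ Y ∈ P ∧ M f

/-- `k` is a weak `N`-kernel of `f` computed in the full subcategory `P`. -/
def IsWeakKernelOn (P : Set C) (N : MorClass C) {K X Y : C} (f : X ⟶ Y) (k : K ⟶ X) : Prop :=
  K ∈ P ∧ N (k ≫ f) ∧ ∀ ⦃K' : C⦄, K' ∈ P → ∀ k' : K' ⟶ X, N (k' ≫ f) →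
    ∃ u : K' ⟶ K, u ≫ k = k'

def HasWeakKernelsOn (P : Set C) (N : MorClass C) : Prop :=
  ∀ ⦃X Y : C⦄, X ∈ P → Y ∈ P → ∀ f : X ⟶ Y, ∃ (K : C) (k : K ⟶ X), IsWeakKernelOn P N f k

/-- The condition (∗π₀) interpreted in the full subcategory `P`. -/
def StarPi0On (P : Set C) (N : MorClass C) {X Y : C} (f₁ f₂ : X ⟶ Y) : Prop :=
  ∀ ⦃K : C⦄ (k : K ⟶ X), IsWeakKernelOn P N f₁ k →
    ∀ ⦃Z : C⦄, Z ∈ P → ∀ g : Y ⟶ Z, (k ≫ f₁ ≫ g = k ≫ f₂ ≫ g ↔ f₁ ≫ g = f₂ ≫ g)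

/-- Every internal reflexive graph of `C` satisfies (∗π₀). -/
def ReflGraphsStarPi0 (N : MorClass C) : Prop :=
  ∀ ⦃G₁ G₀ : C⦄ (d c : G₁ ⟶ G₀) (e : G₀ ⟶ G₁), e ≫ d = 𝟙 G₀ → e ≫ c = 𝟙 G₀ →
    StarPi0 N d c

/-- Every internal reflexive graph of the full subcategory `P` satisfies (∗π₀). -/
def ReflGraphsStarPi0On (P : Set C) (N : MorClass C) : Prop :=
  ∀ ⦃G₁ G₀ : C⦄, G₁ ∈ P → G₀ ∈ P → ∀ (d c : G₁ ⟶ G₀) (e : G₀ ⟶ G₁),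
    e ≫ d = 𝟙 G₀ → e ≫ c = 𝟙 G₀ → StarPi0On P N d c

/-- Every regular epimorphism is a coequalizer of its kernel star (star-regularity condition). -/
def RegEpisCoeqOfKernelStar (N : MorClass C) : Prop :=
  ∀ ⦃X Y : C⦄ (f : X ⟶ Y), IsRegEpi f →
    ∀ ⦃P : C⦄ (u v : P ⟶ X), IsKernelPairOf f u v →
      ∀ ⦃K : C⦄ (k : K ⟶ P), IsNKernel N u k →
        IsCoequalizerOf (k ≫ u) (k ≫ v) f

/-- `f` is `N`-saturating. -/
def IsSaturating (N : MorClass C) {P' Y : C} (f : P' ⟶ Y) : Prop :=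
  ∀ ⦃X : C⦄ (n : X ⟶ Y), N n →
    ∃ (Z : C) (g : Z ⟶ X) (m : Z ⟶ P'), IsRegEpi g ∧ N m ∧ m ≫ f = g ≫ n

/-- `C` is a regular completion of `P`: `P` is a projective cover and every object of `C`
admits a monomorphism into a finite product of `P`-objects (expressed via a jointly monic
finite family). -/
def IsRegularCompletionOf (P : Set C) : Prop :=
  IsProjectiveCover P ∧
    ∀ X : C, ∃ (n : ℕ) (obj : Fin n → C) (_ : ∀ i, obj i ∈ P) (m : ∀ i, X ⟶ obj i),
      ∀ ⦃W : C⦄ (a b : W ⟶ X), (∀ i, a ≫ m i = b ≫ m i) → a = b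

/-- `C` is pointed via the ideal `N` of null morphisms. -/
def IsPointedVia (N : MorClass C) : Prop :=
  IsMorIdeal N ∧ ∀ X Y : C, ∃! f : X ⟶ Y, N f

/-- The full subcategory `P` is pointed via the ideal `N` of null morphisms. -/
def IsPointedOn (P : Set C) (N : MorClass C) : Prop :=
  IsMorIdealOn P N ∧ ∀ ⦃X Y : C⦄, X ∈ P → Y ∈ P → ∃! f : X ⟶ Y, N f

/-- `f` is a normal epimorphism (a cokernel) with respect to the ideal `N`. -/
def IsNormalEpi (N : MorClass C) {X Y : C} (f : X ⟶ Y) : Prop :=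
  ∃ (A : C) (h : A ⟶ X), N (h ≫ f) ∧
    ∀ ⦃Z : C⦄ (g : X ⟶ Z), N (h ≫ g) → ∃! t : Y ⟶ Z, f ≫ t = g


/-- Regular epimorphisms are epimorphisms. -/
lemma epi_of_regEpi {X Y : C} {f : X ⟶ Y} (hf : IsRegEpi f) :
    ∀ {Z : C} {a b : Y ⟶ Z}, f ≫ a = f ≫ b → a = b := by
  obtain ⟨Q, u, v, huv, hcoeq⟩ := hf
  intro Z a b hab
  have h1 : u ≫ f ≫ a = v ≫ f ≫ a := by
    rw [← Category.assoc, huv, Category.assoc]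
  obtain ⟨t, ht, huniq⟩ := hcoeq (f ≫ a) h1
  exact (huniq a rfl).trans (huniq b hab.symm).symm

/-- Core lemma: (∗π₀) transfers from the projective cover to C, for P-valued targets. -/
lemma core_transfer (hC : IsRegularCat C) (N : MorClass C) (hN : IsMorIdeal N)
    (hk : HasNKernels N) (P : Set C) (hP : IsRegularCompletionOf P)
    (h : ReflGraphsStarPi0On P (restClass P N))
    {G₁ G₀ : C} (d c : G₁ ⟶ G₀) (e : G₀ ⟶ G₁) (hed : e ≫ d = 𝟙 G₀)
    (hec : e ≫ c = 𝟙 G₀) {K : C} (k : K ⟶ G₁) (hkw : IsWeakKernel N d k)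
    {Z : C} (hZ : Z ∈ P) (g : G₀ ⟶ Z) (hg : k ≫ d ≫ g = k ≫ c ≫ g) :
    d ≫ g = c ≫ g := by
  haveI : HasFiniteLimits C := hC.hasFiniteLimits
  obtain ⟨P₀, hP₀, e₀, he₀⟩ := hP.1.covers G₀
  -- first pullback: of d along e₀
  let p1 : pullback d e₀ ⟶ G₁ := pullback.fst d e₀
  let p2 : pullback d e₀ ⟶ P₀ := pullback.snd d e₀
  have sq1 : IsPullbackSq p1 p2 d e₀ := by
    refine ⟨pullback.condition, ?_⟩
    intro Q q₁ q₂ hq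
    refine ⟨pullback.lift q₁ q₂ hq, ⟨pullback.lift_fst _ _ _, pullback.lift_snd _ _ _⟩, ?_⟩
    rintro w ⟨h1, h2⟩
    apply pullback.hom_ext
    · exact h1.trans (pullback.lift_fst _ _ _).symm
    · exact h2.trans (pullback.lift_snd _ _ _).symm
  have hp1 : IsRegEpi p1 := hC.regEpiStable p1 p2 d e₀ sq1 he₀
  -- second pullback: of (p1 ≫ c) along e₀
  let q1 : pullback (p1 ≫ c) e₀ ⟶ pullback d e₀ := pullback.fst (p1 ≫ c) e₀
  let q2 : pullback (p1 ≫ c) e₀ ⟶ P₀ := pullback.snd (p1 ≫ c) e₀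
  have sq2 : IsPullbackSq q1 q2 (p1 ≫ c) e₀ := by
    refine ⟨pullback.condition, ?_⟩
    intro Q r₁ r₂ hq
    refine ⟨pullback.lift r₁ r₂ hq, ⟨pullback.lift_fst _ _ _, pullback.lift_snd _ _ _⟩, ?_⟩
    rintro w ⟨h1, h2⟩
    apply pullback.hom_ext
    · exact h1.trans (pullback.lift_fst _ _ _).symm
    · exact h2.trans (pullback.lift_snd _ _ _).symm
  have hq1 : IsRegEpi q1 := hC.regEpiStable q1 q2 (p1 ≫ c) e₀ sq2 he₀
  -- projective cover of the double pullback
  obtain ⟨P₁, hP₁, r, hr⟩ := hP.1.covers (pullback (p1 ≫ c) e₀)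
  let e₁ : P₁ ⟶ G₁ := r ≫ q1 ≫ p1
  let d' : P₁ ⟶ P₀ := r ≫ q1 ≫ p2
  let c' : P₁ ⟶ P₀ := r ≫ q2
  have he₁d : e₁ ≫ d = d' ≫ e₀ := by
    simp only [e₁, d', Category.assoc, pullback.condition (f := d) (g := e₀)]
    exact congrArg (fun t => r ≫ q1 ≫ t) (pullback.condition (f := d) (g := e₀))
  have he₁c : e₁ ≫ c = c' ≫ e₀ := by
    have := pullback.condition (f := p1 ≫ c) (g := e₀)
    simp only [e₁, c', Category.assoc] at this ⊢
    rw [this]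
  -- the common section
  have ha1 : (e₀ ≫ e) ≫ d = 𝟙 P₀ ≫ e₀ := by
    rw [Category.assoc, hed, Category.comp_id, Category.id_comp]
  let a : P₀ ⟶ pullback d e₀ := pullback.lift (e₀ ≫ e) (𝟙 P₀) ha1
  have ha2 : a ≫ (p1 ≫ c) = 𝟙 P₀ ≫ e₀ := by
    rw [← Category.assoc]
    have : a ≫ p1 = e₀ ≫ e := pullback.lift_fst _ _ _
    rw [this, Category.assoc, hec, Category.comp_id, Category.id_comp]
  let s₀ : P₀ ⟶ pullback (p1 ≫ c) e₀ := pullback.lift a (𝟙 P₀) ha2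
  obtain ⟨s, hs⟩ := hP.1.proj hP₀ r hr s₀
  have hsd' : s ≫ d' = 𝟙 P₀ := by
    show s ≫ r ≫ q1 ≫ p2 = 𝟙 P₀
    rw [← Category.assoc, hs]
    have h1 : s₀ ≫ q1 = a := pullback.lift_fst _ _ _
    have h2 : a ≫ p2 = 𝟙 P₀ := pullback.lift_snd _ _ _
    rw [← Category.assoc, h1, h2]
  have hsc' : s ≫ c' = 𝟙 P₀ := by
    show s ≫ r ≫ q2 = 𝟙 P₀
    rw [← Category.assoc, hs]
    exact pullback.lift_snd _ _ _
  -- N-kernel of d' and its projective cover: a weak N_P-kernel of d'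
  obtain ⟨Kd, κ, hκ⟩ := hk d'
  obtain ⟨K', hK', ρ, hρ⟩ := hP.1.covers Kd
  have hwk : IsWeakKernelOn P (restClass P N) d' (ρ ≫ κ) := by
    refine ⟨hK', ⟨hK', hP₀, ?_⟩, ?_⟩
    · rw [Category.assoc]; exact hN.1 ρ _ hκ.1
    · intro K'' hK'' k'' hk''
      obtain ⟨w, hw, -⟩ := hκ.2 k'' hk''.2.2
      obtain ⟨w', hw'⟩ := hP.1.proj hK'' ρ hρ w
      exact ⟨w', by rw [← Category.assoc, hw', hw]⟩
  -- κ ≫ e₁ factors through k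
  have hNke : N ((κ ≫ e₁) ≫ d) := by
    rw [Category.assoc, he₁d, ← Category.assoc]
    exact hN.2 _ e₀ hκ.1
  obtain ⟨w, hw⟩ := hkw.2 (κ ≫ e₁) hNke
  -- apply the hypothesis
  have hstar := h hP₁ hP₀ d' c' s hsd' hsc'
  have key : (ρ ≫ κ) ≫ d' ≫ (e₀ ≫ g) = (ρ ≫ κ) ≫ c' ≫ (e₀ ≫ g) := by
    have hA : κ ≫ d' ≫ e₀ ≫ g = w ≫ k ≫ d ≫ g := by
      have : κ ≫ (d' ≫ e₀) ≫ g = κ ≫ (e₁ ≫ d) ≫ g := by rw [he₁d]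
      simp only [Category.assoc] at this
      rw [this, ← Category.assoc, ← Category.assoc, ← hw]
      simp only [Category.assoc]
    have hB : κ ≫ c' ≫ e₀ ≫ g = w ≫ k ≫ c ≫ g := by
      have : κ ≫ (c' ≫ e₀) ≫ g = κ ≫ (e₁ ≫ c) ≫ g := by rw [he₁c]
      simp only [Category.assoc] at this
      rw [this, ← Category.assoc, ← Category.assoc, ← hw]
      simp only [Category.assoc]
    simp only [Category.assoc] at hA hB ⊢
    rw [hA, hB]
    have := congrArg (fun t => ρ ≫ w ≫ t) hg
    exact this
  have hres : d' ≫ e₀ ≫ g = c' ≫ e₀ ≫ g := (hstar (ρ ≫ κ) hwk hZ (e₀ ≫ g)).1 key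
  -- transport back along the regular epi e₁
  have he : e₁ ≫ d ≫ g = e₁ ≫ c ≫ g := by
    have h1 : (e₁ ≫ d) ≫ g = (e₁ ≫ c) ≫ g := by rw [he₁d, he₁c]; simpa using hres
    simpa using h1
  simp only [e₁, Category.assoc] at he
  exact epi_of_regEpi hp1 (epi_of_regEpi hq1 (epi_of_regEpi hr he))

/-- Full transfer: (∗π₀) for reflexive graphs, arbitrary target object. -/
lemma full_transfer (hC : IsRegularCat C) (N : MorClass C) (hN : IsMorIdeal N)
    (hk : HasNKernels N) (P : Set C) (hP : IsRegularCompletionOf P)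
    (h : ReflGraphsStarPi0On P (restClass P N))
    {G₁ G₀ : C} (d c : G₁ ⟶ G₀) (e : G₀ ⟶ G₁) (hed : e ≫ d = 𝟙 G₀)
    (hec : e ≫ c = 𝟙 G₀) {K : C} (k : K ⟶ G₁) (hkw : IsWeakKernel N d k)
    {Z : C} (g : G₀ ⟶ Z) (hg : k ≫ d ≫ g = k ≫ c ≫ g) :
    d ≫ g = c ≫ g := by
  obtain ⟨n, obj, hobj, m, hm⟩ := hP.2 Z
  refine hm (d ≫ g) (c ≫ g) (fun i => ?_)
  have hg' : k ≫ d ≫ (g ≫ m i) = k ≫ c ≫ (g ≫ m i) := by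
    have := congrArg (fun t => t ≫ m i) hg
    simp only [Category.assoc] at this ⊢
    exact this
  have := core_transfer hC N hN hk P hP h d c e hed hec k hkw (hobj i) (g ≫ m i) hg'
  simpa using this

/-- Let (C, N) be a regular multi-pointed category with N-kernels, where C
is the regular completion of its projective cover P. If every internal reflexive graph in
(P, N_P) satisfies (∗π₀), then (C, N) is star-regular. -/
theorem statement13 (hC : IsRegularCat C) (N : MorClass C) (hN : IsMorIdeal N)
    (hk : HasNKernels N) (P : Set C) (hP : IsRegularCompletionOf P)
    (h : ReflGraphsStarPi0On P (restClass P N)) :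
    RegEpisCoeqOfKernelStar N := by
  intro X Y f hf Pk u v hKP K k hkk
  obtain ⟨e, ⟨heu, hev⟩, -⟩ := hKP.2 (𝟙 X) (𝟙 X) rfl
  constructor
  · rw [Category.assoc, Category.assoc, hKP.1]
  · intro Z g hg
    have hg' : k ≫ u ≫ g = k ≫ v ≫ g := by
      simpa only [Category.assoc] using hg
    have huvg : u ≫ g = v ≫ g :=
      full_transfer hC N hN hk P hP h u v e heu hev k
        ⟨hkk.1, fun K' k' hk' => (hkk.2 k' hk').exists⟩ g hg'
    obtain ⟨Q, a, b, hab, hcoeq⟩ := hf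
    obtain ⟨w, ⟨hwu, hwv⟩, -⟩ := hKP.2 a b hab
    have habg : a ≫ g = b ≫ g := by
      rw [← hwu, ← hwv, Category.assoc, Category.assoc, huvg]
    exact hcoeq g habg
end

section
/- Let (P, N) be a multi-pointed category where P has weak finite limits and weak N-kernels, and let C be the regular completion of P. Then (C, N^C) is star-regular if and only if every internal reflexive graph in (P, N) satisfies (∗π₀). -/
open CategoryTheory CategoryTheory.Limits

universe v u

variable {C : Type u} [Category.{v} C]

/-- The full subcategory `P` has weak finite limits. -/
def HasWeakFiniteLimitsOn (P : Set C) : Prop :=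
  ∀ (J : Type) [SmallCategory J] [FinCategory J]
    (F : J ⥤ ObjectProperty.FullSubcategory (fun X => X ∈ P)),
    ∃ c : Cone F, ∀ c' : Cone F, Nonempty (c' ⟶ c)

section Aux

theorem regEpi_epi {X Y Z : C} {f : X ⟶ Y} (h : IsRegEpi f) {a b : Y ⟶ Z}
    (hab : f ≫ a = f ≫ b) : a = b := by
  obtain ⟨Q, u, v, huv, hco⟩ := h
  have h1 : u ≫ f ≫ a = v ≫ f ≫ a := by
    rw [← Category.assoc, huv, Category.assoc]
  exact ((hco (f ≫ a) h1).unique rfl hab.symm)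

theorem id_regEpi (X : C) : IsRegEpi (𝟙 X) :=
  ⟨X, 𝟙 X, 𝟙 X, rfl, fun _ g _ => ⟨g, by simp, fun y hy => by simpa using hy⟩⟩

theorem split_regEpi {X Y : C} (p : X ⟶ Y) (s : Y ⟶ X) (hs : s ≫ p = 𝟙 Y) :
    IsRegEpi p := by
  refine ⟨X, p ≫ s, 𝟙 X, by rw [Category.assoc, hs]; simp, ?_⟩
  intro Z g hg
  simp only [Category.assoc, Category.id_comp] at hg
  refine ⟨s ≫ g, by rw [← Category.assoc] at hg ⊢; exact hg, ?_⟩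
  intro y hy
  calc y = (s ≫ p) ≫ y := by rw [hs]; simp
    _ = s ≫ g := by rw [Category.assoc, hy]

theorem regEpi_coeq_kp {X Y R : C} {f : X ⟶ Y} (hf : IsRegEpi f) {u v : R ⟶ X}
    (kp : IsKernelPairOf f u v) : IsCoequalizerOf u v f := by
  obtain ⟨P₀, s, t, hst, hco⟩ := hf
  refine ⟨kp.1, ?_⟩
  intro Z g hg
  obtain ⟨w, ⟨hwu, hwv⟩, -⟩ := kp.2 s t hst
  have hsg : s ≫ g = t ≫ g := by
    rw [← hwu, ← hwv, Category.assoc, Category.assoc, hg]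
  exact hco g hsg

theorem exists_kernelPair (hC : IsRegularCat C) {X Y : C} (f : X ⟶ Y) :
    ∃ (R : C) (u v : R ⟶ X), IsKernelPairOf f u v := by
  haveI := hC.hasFiniteLimits
  refine ⟨pullback f f, pullback.fst f f, pullback.snd f f, pullback.condition, ?_⟩
  intro Q u' v' h
  exact ⟨pullback.lift u' v' h, ⟨pullback.lift_fst _ _ _, pullback.lift_snd _ _ _⟩,
    fun y hy => pullback.hom_ext (by rw [pullback.lift_fst]; exact hy.1)
      (by rw [pullback.lift_snd]; exact hy.2)⟩

theorem exists_pullbackSq (hC : IsRegularCat C) {X Y Z : C} (f : X ⟶ Z) (g : Y ⟶ Z) :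
    ∃ (Q : C) (p₁ : Q ⟶ X) (p₂ : Q ⟶ Y), IsPullbackSq p₁ p₂ f g := by
  haveI := hC.hasFiniteLimits
  refine ⟨pullback f g, pullback.fst f g, pullback.snd f g, pullback.condition, ?_⟩
  intro Q q₁ q₂ h
  exact ⟨pullback.lift q₁ q₂ h, ⟨pullback.lift_fst _ _ _, pullback.lift_snd _ _ _⟩,
    fun y hy => pullback.hom_ext (by rw [pullback.lift_fst]; exact hy.1)
      (by rw [pullback.lift_snd]; exact hy.2)⟩

end Aux
theorem image_fact (hC : IsRegularCat C) {X Y : C} (f : X ⟶ Y) :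
    ∃ (I : C) (q : X ⟶ I) (m : I ⟶ Y), IsRegEpi q ∧
      (∀ ⦃W : C⦄ (a b : W ⟶ I), a ≫ m = b ≫ m → a = b) ∧ q ≫ m = f := by
  obtain ⟨R, u, v, kp⟩ := exists_kernelPair hC f
  obtain ⟨Q, q, hq⟩ := hC.coeqOfKernelPairs f u v kp
  obtain ⟨m, hm, -⟩ := hq.2 f kp.1
  have hqre : IsRegEpi q := ⟨R, u, v, hq⟩
  refine ⟨Q, q, m, hqre, ?_, hm⟩
  intro W a b hab
  obtain ⟨Pa, w₁, x₁, sq₁⟩ := exists_pullbackSq hC a q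
  have hw₁ : IsRegEpi w₁ := hC.regEpiStable w₁ x₁ a q sq₁ hqre
  obtain ⟨Pb, p₂, x₂, sq₂⟩ := exists_pullbackSq hC (w₁ ≫ b) q
  have hp₂ : IsRegEpi p₂ := hC.regEpiStable p₂ x₂ (w₁ ≫ b) q sq₂ hqre
  have s1 := reassoc_of% sq₁.1  -- w₁ ≫ a ≫ z = x₁ ≫ q ≫ z
  have s2 := reassoc_of% sq₂.1  -- p₂ ≫ w₁ ≫ b ≫ z = x₂ ≫ q ≫ z
  have h1 : (p₂ ≫ x₁) ≫ f = x₂ ≫ f := by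
    rw [← hm]
    simp only [Category.assoc]
    rw [← s1, hab, s2]
  obtain ⟨w, ⟨hwu, hwv⟩, -⟩ := kp.2 (p₂ ≫ x₁) x₂ h1
  have hu := reassoc_of% hwu
  have hv := reassoc_of% hwv
  have h2 : p₂ ≫ w₁ ≫ a = p₂ ≫ w₁ ≫ b := by
    rw [sq₁.1, ← hu, hq.1, hv, ← sq₂.1]
  exact regEpi_epi hw₁ (regEpi_epi hp₂ h2)

theorem descend (hC : IsRegularCat C) {W₀ W I V : C} {e : W₀ ⟶ W} (he : IsRegEpi e)
    {μ : I ⟶ V} (hμ : ∀ ⦃Z : C⦄ (a b : Z ⟶ I), a ≫ μ = b ≫ μ → a = b)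
    {s : W₀ ⟶ I} {k₂ : W ⟶ V} (hsk : s ≫ μ = e ≫ k₂) : ∃ h : W ⟶ I, h ≫ μ = k₂ := by
  obtain ⟨R, c₁, c₂, kp⟩ := exists_kernelPair hC e
  have hcs : c₁ ≫ s = c₂ ≫ s := by
    apply hμ
    rw [Category.assoc, Category.assoc, hsk, ← Category.assoc, ← Category.assoc, kp.1]
  obtain ⟨h, hh, -⟩ := (regEpi_coeq_kp he kp).2 s hcs
  refine ⟨h, regEpi_epi he ?_⟩
  rw [← Category.assoc, hh, hsk]
section Ideal
variable {P : Set C} {N : MorClass C}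

theorem extOfN (hN : IsMorIdealOn P N) {A B : C} {n : A ⟶ B} (hn : N n) :
    extClass P N n :=
  ⟨A, B, (hN.1 n hn).1, (hN.1 n hn).2, n, 𝟙 A, 𝟙 B, id_regEpi A, id_regEpi B, hn, by simp⟩

theorem NOfExt (hP : IsRegularCompletionOf P) (hN : IsMorIdealOn P N) {A B : C}
    (hA : A ∈ P) (hB : B ∈ P) {f : A ⟶ B} (hf : extClass P N f) : N f := by
  obtain ⟨A₀, B₀, hA₀, hB₀, n, e, e', he, he', hn, hsq⟩ := hf
  obtain ⟨s, hs⟩ := hP.1.proj hA e he (𝟙 A)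
  have : f = (s ≫ n) ≫ e' := by
    calc f = (s ≫ e) ≫ f := by rw [hs]; simp
      _ = s ≫ n ≫ e' := by rw [Category.assoc, hsq]
      _ = (s ≫ n) ≫ e' := by simp [Category.assoc]
  rw [this]
  exact hN.2.2 (s ≫ n) e' hB (hN.2.1 s n hA hn)

theorem extPre (hP : IsRegularCompletionOf P) (hN : IsMorIdealOn P N) {X Y Z : C}
    (f : X ⟶ Y) {g : Y ⟶ Z} (hg : extClass P N g) : extClass P N (f ≫ g) := by
  obtain ⟨A, B, hA, hB, n, e, e', he, he', hn, hsq⟩ := hg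
  obtain ⟨A₀, hA₀, c, hc⟩ := hP.1.covers X
  obtain ⟨t, ht⟩ := hP.1.proj hA₀ e he (c ≫ f)
  refine ⟨A₀, B, hA₀, hB, t ≫ n, c, e', hc, he', hN.2.1 t n hA₀ hn, ?_⟩
  rw [← Category.assoc, ← ht, Category.assoc, hsq, Category.assoc]

theorem extPost (hP : IsRegularCompletionOf P) (hN : IsMorIdealOn P N) {X Y Z : C}
    {g : X ⟶ Y} (hg : extClass P N g) (f : Y ⟶ Z) : extClass P N (g ≫ f) := by
  obtain ⟨A, B, hA, hB, n, e, e', he, he', hn, hsq⟩ := hg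
  obtain ⟨B', hB', z, hz⟩ := hP.1.covers Z
  obtain ⟨s, hs⟩ := hP.1.proj hB z hz (e' ≫ f)
  refine ⟨A, B', hA, hB', n ≫ s, e, z, he, hz, hN.2.2 n s hB' hn, ?_⟩
  rw [← Category.assoc, hsq, Category.assoc, ← hs, Category.assoc]

theorem extCancel (hP : IsRegularCompletionOf P) (hN : IsMorIdealOn P N) {A X Y : C}
    (hA : A ∈ P) {e : A ⟶ X} (he : IsRegEpi e) {f : X ⟶ Y}
    (h : extClass P N (e ≫ f)) : extClass P N f := by
  obtain ⟨A₀, B₀, hA₀, hB₀, n, e₀, e₀', he₀, he₀', hn, hsq⟩ := h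
  obtain ⟨s, hs⟩ := hP.1.proj hA e₀ he₀ (𝟙 A)
  refine ⟨A, B₀, hA, hB₀, s ≫ n, e, e₀', he, he₀', hN.2.1 s n hA hn, ?_⟩
  calc e ≫ f = (s ≫ e₀) ≫ e ≫ f := by rw [hs]; simp
    _ = s ≫ e₀ ≫ e ≫ f := by simp [Category.assoc]
    _ = s ≫ n ≫ e₀' := by rw [hsq]
    _ = (s ≫ n) ≫ e₀' := by simp [Category.assoc]

theorem extSquare (hP : IsRegularCompletionOf P) (hN : IsMorIdealOn P N) {X Y A B : C}
    (hA : A ∈ P) (hB : B ∈ P) {a : A ⟶ X} (_ha : IsRegEpi a) {b : B ⟶ Y}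
    (_hb : IsRegEpi b) {f : X ⟶ Y} (hf : extClass P N f) :
    ∃ n : A ⟶ B, N n ∧ a ≫ f = n ≫ b := by
  obtain ⟨A₀, B₀, hA₀, hB₀, n, e₀, e₀', he₀, he₀', hn, hsq⟩ := hf
  obtain ⟨s, hs⟩ := hP.1.proj hA e₀ he₀ a
  obtain ⟨t, ht⟩ := hP.1.proj hB₀ b _hb e₀'
  refine ⟨s ≫ n ≫ t, hN.2.1 s (n ≫ t) hA (hN.2.2 n t hB hn), ?_⟩
  calc a ≫ f = (s ≫ e₀) ≫ f := by rw [hs]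
    _ = s ≫ n ≫ e₀' := by rw [Category.assoc, hsq]
    _ = s ≫ n ≫ t ≫ b := by rw [ht]
    _ = (s ≫ n ≫ t) ≫ b := by simp [Category.assoc]

end Ideal
theorem hasNK (hC : IsRegularCat C) {P : Set C} (hP : IsRegularCompletionOf P)
    {N : MorClass C} (hN : IsMorIdealOn P N) (hwk : HasWeakKernelsOn P N) :
    HasNKernels (extClass P N) := by
  intro X Y f
  obtain ⟨B, hB, b, hb⟩ := hP.1.covers Y
  obtain ⟨D, p, r, hD⟩ := exists_pullbackSq hC f b
  obtain ⟨D₀, hD₀, d, hd⟩ := hP.1.covers D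
  obtain ⟨K, κ, hκ⟩ := hwk hD₀ hB (d ≫ r)
  obtain ⟨I, q₀, μ, hq₀, hμ, hfac⟩ := image_fact hC (κ ≫ d ≫ p)
  have hDc := reassoc_of% hD.1  -- p ≫ f ≫ z = r ≫ b ≫ z
  refine ⟨I, μ, ?_, ?_⟩
  · apply extCancel hP hN hκ.1 hq₀
    have : q₀ ≫ μ ≫ f = (κ ≫ d ≫ r) ≫ b := by
      rw [← Category.assoc, hfac]
      simp only [Category.assoc]
      rw [hD.1]
    rw [this]
    exact extPost hP hN (extOfN hN hκ.2.1) b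
  · intro W k₂ hk₂
    obtain ⟨W₀, hW₀, c, hcov⟩ := hP.1.covers W
    have h1 : extClass P N (c ≫ k₂ ≫ f) := extPre hP hN c hk₂
    obtain ⟨n, hn, hsq⟩ := extSquare hP hN hW₀ hB (id_regEpi W₀) hb h1
    rw [Category.id_comp] at hsq   -- hsq : c ≫ k₂ ≫ f = n ≫ b
    obtain ⟨v, ⟨hvp, hvr⟩, -⟩ := hD.2 (c ≫ k₂) n (by rw [Category.assoc, hsq])
    obtain ⟨t, ht⟩ := hP.1.proj hW₀ d hd v
    have hNt : N (t ≫ d ≫ r) := by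
      rw [← Category.assoc, ht, hvr]; exact hn
    obtain ⟨u, hu⟩ := hκ.2.2 hW₀ t hNt
    have hs : (u ≫ q₀) ≫ μ = c ≫ k₂ := by
      rw [Category.assoc, hfac, ← Category.assoc, hu, ← Category.assoc, ht, hvp]
    obtain ⟨h, hh⟩ := descend hC hcov hμ hs
    exact ⟨h, hh, fun y hy => hμ y h (hy.trans hh.symm)⟩
theorem fwd (hC : IsRegularCat C) {P : Set C} (hP : IsRegularCompletionOf P)
    {N : MorClass C} (hN : IsMorIdealOn P N)
    (hK : HasNKernels (extClass P N)) (hstar : RegEpisCoeqOfKernelStar (extClass P N)) :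
    ReflGraphsStarPi0On P N := by
  intro G₁ G₀ hG₁ hG₀ d c e hed hec
  intro K k hk Z hZ g
  constructor
  · intro hyp
    obtain ⟨T, p₁, p₂, kp⟩ := exists_kernelPair hC d
    obtain ⟨KT, κ, hκ⟩ := hK p₁
    have hd : IsRegEpi d := split_regEpi d e hed
    have hcoeq := hstar d hd p₁ p₂ kp κ hκ
    have S : ∀ ⦃W₀ : C⦄, W₀ ∈ P → ∀ γ : W₀ ⟶ G₁, extClass P N (γ ≫ d) →
        γ ≫ d ≫ g = γ ≫ c ≫ g := by
      intro W₀ hW₀ γ hγ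
      have hNγ : N (γ ≫ d) := NOfExt hP hN hW₀ hG₀ hγ
      obtain ⟨u, hu⟩ := hk.2.2 hW₀ γ hNγ
      rw [← hu]
      simp only [Category.assoc]
      rw [hyp]
    obtain ⟨W₀, hW₀, w, hw⟩ := hP.1.covers KT
    have hκ1 : extClass P N (κ ≫ p₁) := hκ.1
    have hα : extClass P N ((w ≫ κ ≫ p₁) ≫ d) := by
      have := extPre hP hN w (extPost hP hN hκ1 d)
      simpa [Category.assoc] using this
    have hαβ : (w ≫ κ ≫ p₁) ≫ d = (w ≫ κ ≫ p₂) ≫ d := by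
      simp only [Category.assoc]
      rw [kp.1]
    have hβ : extClass P N ((w ≫ κ ≫ p₂) ≫ d) := hαβ ▸ hα
    have e1 := S hW₀ (w ≫ κ ≫ p₁) hα
    have e2 := S hW₀ (w ≫ κ ≫ p₂) hβ
    have hαβ' := reassoc_of% hαβ
    have e3 : (w ≫ κ ≫ p₁) ≫ c ≫ g = (w ≫ κ ≫ p₂) ≫ c ≫ g := by
      simp only [Category.assoc] at e1 e2 ⊢
      rw [← e1, ← e2]
      exact hαβ' g
    have e4 : (κ ≫ p₁) ≫ c ≫ g = (κ ≫ p₂) ≫ c ≫ g := by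
      apply regEpi_epi hw
      simpa [Category.assoc] using e3
    obtain ⟨h, hh, -⟩ := hcoeq.2 (c ≫ g) e4
    have hgh : h = g := by
      have := reassoc_of% hh   -- d ≫ h ≫ z = ...
      calc h = (e ≫ d) ≫ h := by rw [hed]; simp
        _ = e ≫ c ≫ g := by rw [Category.assoc, hh]
        _ = (e ≫ c) ≫ g := by simp [Category.assoc]
        _ = g := by rw [hec]; simp
    rw [hgh] at hh
    exact hh
  · intro hyp
    rw [hyp]
theorem bwd2 (hC : IsRegularCat C) {P : Set C} (hP : IsRegularCompletionOf P)
    {N : MorClass C} (hN : IsMorIdealOn P N) (hwk : HasWeakKernelsOn P N)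
    (hpi : ReflGraphsStarPi0On P N) : RegEpisCoeqOfKernelStar (extClass P N) := by
  intro X Y f hf R u v kp K κ hκ
  have huvf : (κ ≫ u) ≫ f = (κ ≫ v) ≫ f := by
    simp only [Category.assoc]; rw [kp.1]
  refine ⟨huvf, ?_⟩
  intro W g hg
  suffices huv : u ≫ g = v ≫ g by
    exact (regEpi_coeq_kp hf kp).2 g huv
  -- diagonal of the kernel pair
  obtain ⟨δ, ⟨hδu, hδv⟩, -⟩ := kp.2 (𝟙 X) (𝟙 X) rfl
  -- cover X
  obtain ⟨A₀, hA₀, a₀, ha₀⟩ := hP.1.covers X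
  -- pullbacks
  obtain ⟨E₁, πE, σ₁, sq₁⟩ := exists_pullbackSq hC u a₀
  have hπE : IsRegEpi πE := hC.regEpiStable πE σ₁ u a₀ sq₁ ha₀
  obtain ⟨E₂, π₂, σ₂, sq₂⟩ := exists_pullbackSq hC (πE ≫ v) a₀
  have hπ₂ : IsRegEpi π₂ := hC.regEpiStable π₂ σ₂ (πE ≫ v) a₀ sq₂ ha₀
  obtain ⟨A₁, hA₁, a₁', ha₁'⟩ := hP.1.covers E₂
  -- graph in P
  set d' : A₁ ⟶ A₀ := a₁' ≫ π₂ ≫ σ₁ with hd'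
  set c' : A₁ ⟶ A₀ := a₁' ≫ σ₂ with hc'
  -- section
  obtain ⟨ε₁, ⟨hε₁, hε₁'⟩, -⟩ := sq₁.2 (a₀ ≫ δ) (𝟙 A₀)
    (by rw [Category.assoc, hδu, Category.id_comp, Category.comp_id])
  obtain ⟨ε, ⟨hε, hε'⟩, -⟩ := sq₂.2 ε₁ (𝟙 A₀)
    (by rw [← Category.assoc, hε₁, Category.assoc, hδv, Category.id_comp, Category.comp_id])
  obtain ⟨e', he'⟩ := hP.1.proj hA₀ a₁' ha₁' ε
  have hed : e' ≫ d' = 𝟙 A₀ := by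
    rw [hd', ← Category.assoc, he', ← Category.assoc, hε, hε₁']
  have hec : e' ≫ c' = 𝟙 A₀ := by
    rw [hc', ← Category.assoc, he', hε']
  -- weak kernel in P
  obtain ⟨KP, kP, hkP⟩ := hwk hA₁ hA₀ d'
  -- key commutation facts
  have hta : d' ≫ a₀ = a₁' ≫ π₂ ≫ πE ≫ u := by
    rw [hd']; simp only [Category.assoc]; rw [← sq₁.1]
  have htb : c' ≫ a₀ = a₁' ≫ π₂ ≫ πE ≫ v := by
    rw [hc']; simp only [Category.assoc]; rw [← sq₂.1]
  -- factor through the N-kernel κ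
  have hNk : extClass P N ((kP ≫ a₁' ≫ π₂ ≫ πE) ≫ u) := by
    have h1 : (kP ≫ a₁' ≫ π₂ ≫ πE) ≫ u = (kP ≫ d') ≫ a₀ := by
      simp only [Category.assoc]
      rw [← hta]
    rw [h1]
    exact extPost hP hN (extOfN hN hkP.2.1) a₀
  obtain ⟨wκ, hwκ, -⟩ := hκ.2 (kP ≫ a₁' ≫ π₂ ≫ πE) hNk
  have hwκ' := reassoc_of% hwκ
  have hta' := reassoc_of% hta
  have htb' := reassoc_of% htb
  simp only [Category.assoc] at hg
  have hstar : kP ≫ d' ≫ a₀ ≫ g = kP ≫ c' ≫ a₀ ≫ g := by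
    rw [hta' g, ← hwκ' (u ≫ g), hg, hwκ' (v ≫ g), ← htb' g]
  -- embedding of W into P-objects
  obtain ⟨nW, obj, hobj, m, hjm⟩ := hP.2 W
  have hi : ∀ i, d' ≫ a₀ ≫ g ≫ m i = c' ≫ a₀ ≫ g ≫ m i := by
    intro i
    refine (hpi hA₁ hA₀ d' c' e' hed hec kP hkP (hobj i) (a₀ ≫ g ≫ m i)).mp ?_
    have := congrArg (fun t => t ≫ m i) hstar
    simpa only [Category.assoc] using this
  have hjoint : d' ≫ a₀ ≫ g = c' ≫ a₀ ≫ g := by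
    have := hjm (d' ≫ a₀ ≫ g) (c' ≫ a₀ ≫ g)
      (fun i => by simpa only [Category.assoc] using hi i)
    exact this
  apply regEpi_epi hπE
  apply regEpi_epi hπ₂
  apply regEpi_epi ha₁'
  rw [← hta' g, ← htb' g]
  exact hjoint
/-- Let (P, N) be a multi-pointed category where P has weak finite limits
and weak N-kernels, and let C be the regular completion of P. Then (C, N^C) is
star-regular iff every internal reflexive graph in (P, N) satisfies (∗π₀). -/
theorem statement14 (hC : IsRegularCat C) (P : Set C) (hP : IsRegularCompletionOf P)
    (hwfl : HasWeakFiniteLimitsOn P)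
    (N : MorClass C) (hN : IsMorIdealOn P N) (hwk : HasWeakKernelsOn P N) :
    (HasNKernels (extClass P N) ∧ RegEpisCoeqOfKernelStar (extClass P N)) ↔
      ReflGraphsStarPi0On P N := by
  constructor
  · rintro ⟨hK, hstar⟩
    exact fwd hC hP hN hK hstar
  · intro hpi
    exact ⟨hasNK hC hP hN hwk, bwd2 hC hP hN hwk hpi⟩
end

section
/- Let Ω = {d, 0} with d binary and 0 nullary, and let E consist of the single identity d(x,x) = 0. Then every free (Ω, E)-algebra satisfies the quasi-identity d(x,y) = 0 ⟹ x = y. -/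
/-- An (Ω, E)-algebra for Ω = {d, 0} (d binary, 0 nullary) and E = {d(x,x) = 0}. -/
class DAlg (A : Type) where
  d : A → A → A
  zero : A
  d_self : ∀ a : A, d a a = zero

/-- Term algebra over X. -/
inductive FreeTerm (X : Type) : Type
  | var : X → FreeTerm X
  | zero : FreeTerm X
  | node : FreeTerm X → FreeTerm X → FreeTerm X

open Classical in
noncomputable instance (X : Type) : DAlg (FreeTerm X) where
  d t s := if t = s then FreeTerm.zero else FreeTerm.node t s
  zero := FreeTerm.zero
  d_self a := if_pos rfl

open Classical in
theorem FreeTerm.d_eq_zero {X : Type} {u v : FreeTerm X}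
    (h : DAlg.d u v = (DAlg.zero : FreeTerm X)) : u = v := by
  by_cases huv : u = v
  · exact huv
  · exfalso
    have : (if u = v then FreeTerm.zero else FreeTerm.node u v) = FreeTerm.zero := h
    rw [if_neg huv] at this
    cases this

/-- Evaluation homomorphism from the term algebra. -/
noncomputable def FreeTerm.eval {X A : Type} [DAlg A] (ι : X → A) : FreeTerm X → A
  | var x => ι x
  | zero => DAlg.zero
  | node t s => DAlg.d (FreeTerm.eval ι t) (FreeTerm.eval ι s)

open Classical in
theorem FreeTerm.eval_hom {X A : Type} [DAlg A] (ι : X → A) (t s : FreeTerm X) :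
    FreeTerm.eval ι (DAlg.d t s) = DAlg.d (FreeTerm.eval ι t) (FreeTerm.eval ι s) := by
  by_cases hts : t = s
  · subst hts
    show FreeTerm.eval ι (if t = t then FreeTerm.zero else FreeTerm.node t t) = _
    rw [if_pos rfl, DAlg.d_self]
    rfl
  · show FreeTerm.eval ι (if t = s then FreeTerm.zero else FreeTerm.node t s) = _
    rw [if_neg hts]
    rfl

/-- Every free (Ω, E)-algebra (i.e. any algebra A with a universal map
ι : X → A) satisfies the quasi-identity d(x,y) = 0 ⟹ x = y. -/
theorem statement17 {X A : Type} [DAlg A] (ι : X → A)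
    (hfree : ∀ (B : Type) [DAlg B] (f : X → B), ∃! h : A → B,
      (∀ a b : A, h (DAlg.d a b) = DAlg.d (h a) (h b)) ∧
        h DAlg.zero = DAlg.zero ∧ ∀ x : X, h (ι x) = f x) :
    ∀ a b : A, DAlg.d a b = DAlg.zero → a = b := by
  obtain ⟨h, ⟨hd, hz, hι⟩, -⟩ := hfree (FreeTerm X) FreeTerm.var
  -- g := eval ι : FreeTerm X → A
  set g := FreeTerm.eval (A := A) ι with hg
  -- g ∘ h = id by uniqueness in hfree A ι
  obtain ⟨k, -, kuniq⟩ := hfree A ι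
  have hgh : (fun a => g (h a)) = k := by
    apply kuniq
    refine ⟨?_, ?_, ?_⟩
    · intro a b; rw [hd]; exact FreeTerm.eval_hom ι _ _
    · rw [hz]; rfl
    · intro x; rw [hι]; rfl
  have hid : (fun a : A => a) = k := by
    apply kuniq
    exact ⟨fun _ _ => rfl, rfl, fun _ => rfl⟩
  have key : ∀ a : A, g (h a) = a := by
    intro a
    have := congrFun (hgh.trans hid.symm) a
    exact this
  intro a b hab
  have h1 : DAlg.d (h a) (h b) = (DAlg.zero : FreeTerm X) := by
    rw [← hd, hab, hz]
  have h2 : h a = h b := FreeTerm.d_eq_zero h1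
  calc a = g (h a) := (key a).symm
    _ = g (h b) := by rw [h2]
    _ = b := key b
end
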